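/- For every positive integer m, the group SL₂(ℤ[1/m]) is generated by the three matrices A = [[1,0],[1,1]], B = [[0,1],[-1,0]], and U = [[m,0],[0,1/m]]. -/

import Mathlib

/-- The subring ℤ[1/m] of ℚ. -/
def Zinv (m : ℕ) : Subring ℚ := Subring.closure {((m : ℚ))⁻¹}

lemma invMem (m : ℕ) : ((m : ℚ))⁻¹ ∈ Zinv m :=
  Subring.subset_closure (Set.mem_singleton _)

def matA (m : ℕ) : Matrix.SpecialLinearGroup (Fin 2) (Zinv m) :=
  ⟨!![1, 0; 1, 1], by simp [Matrix.det_fin_two_of]⟩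

def matQ (m : ℕ) : Matrix.SpecialLinearGroup (Fin 2) (Zinv m) :=
  ⟨!![1, ⟨-((m : ℚ))⁻¹, neg_mem (invMem m)⟩; 0, 1], by simp [Matrix.det_fin_two_of]⟩

def matB (m : ℕ) : Matrix.SpecialLinearGroup (Fin 2) (Zinv m) :=
  ⟨!![0, 1; -1, 0], by simp [Matrix.det_fin_two_of]⟩

def matU (m : ℕ) (hm : 0 < m) : Matrix.SpecialLinearGroup (Fin 2) (Zinv m) :=
  ⟨!![(m : Zinv m), 0; 0, ⟨((m : ℚ))⁻¹, invMem m⟩], by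
    have hm0 : (m : ℚ) ≠ 0 := Nat.cast_ne_zero.2 hm.ne'
    apply Subtype.ext
    simp [Matrix.det_fin_two_of, mul_inv_cancel₀ hm0]⟩

namespace SLaux

abbrev SL (m : ℕ) := Matrix.SpecialLinearGroup (Fin 2) (Zinv m)

/-- lower elementary matrix -/
def E21 (m : ℕ) (x : Zinv m) : SL m := ⟨!![1, 0; x, 1], by simp [Matrix.det_fin_two_of]⟩

/-- upper elementary matrix -/
def E12 (m : ℕ) (x : Zinv m) : SL m := ⟨!![1, x; 0, 1], by simp [Matrix.det_fin_two_of]⟩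

/-- entrywise coercion to rational matrices -/
def q {m : ℕ} (g : SL m) : Matrix (Fin 2) (Fin 2) ℚ :=
  ((g : Matrix (Fin 2) (Fin 2) (Zinv m))).map ((Zinv m).subtype)

lemma q_mul {m : ℕ} (g h : SL m) : q (g * h) = q g * q h := by
  unfold q
  rw [Matrix.SpecialLinearGroup.coe_mul, Matrix.map_mul]

lemma q_inj {m : ℕ} {g h : SL m} (H : q g = q h) : g = h := by
  apply Subtype.ext
  ext i j
  have := congrFun (congrFun H i) j
  have h2 : (((g : Matrix (Fin 2) (Fin 2) (Zinv m)) i j : Zinv m) : ℚ) =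
      (((h : Matrix (Fin 2) (Fin 2) (Zinv m)) i j : Zinv m) : ℚ) := by
    simpa [q, Matrix.map_apply] using this
  exact h2

lemma q_E21 (m : ℕ) (x : Zinv m) : q (E21 m x) = !![1, 0; (x:ℚ), 1] := by
  ext i j; fin_cases i <;> fin_cases j <;> simp [q, E21, Matrix.map_apply]

lemma q_E12 (m : ℕ) (x : Zinv m) : q (E12 m x) = !![1, (x:ℚ); 0, 1] := by
  ext i j; fin_cases i <;> fin_cases j <;> simp [q, E12, Matrix.map_apply]

lemma q_B (m : ℕ) : q (matB m) = !![0, 1; -1, 0] := by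
  ext i j; fin_cases i <;> fin_cases j <;> simp [q, matB, Matrix.map_apply]

lemma q_U (m : ℕ) (hm : 0 < m) : q (matU m hm) = !![(m:ℚ), 0; 0, ((m:ℚ))⁻¹] := by
  ext i j; fin_cases i <;> fin_cases j <;> simp [q, matU, Matrix.map_apply]

lemma q_one (m : ℕ) : q (1 : SL m) = 1 := by
  ext i j; fin_cases i <;> fin_cases j <;> simp [q, Matrix.map_apply]

lemma E21_mul (m : ℕ) (x y : Zinv m) : E21 m x * E21 m y = E21 m (x + y) := by
  apply q_inj
  rw [q_mul, q_E21, q_E21, q_E21, Matrix.mul_fin_two]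
  norm_num [add_comm]

lemma E21_zero (m : ℕ) : E21 m 0 = 1 := by
  apply q_inj
  rw [q_E21, q_one, Matrix.one_fin_two]
  norm_num

/-- `E21` as a monoid hom from `Multiplicative (Zinv m)`. -/
def e21hom (m : ℕ) : Multiplicative (Zinv m) →* SL m where
  toFun x := E21 m x.toAdd
  map_one' := E21_zero m
  map_mul' x y := (E21_mul m x.toAdd y.toAdd).symm

lemma matA_eq (m : ℕ) : matA m = E21 m 1 := by
  apply q_inj
  rw [q_E21]
  ext i j; fin_cases i <;> fin_cases j <;> simp [q, matA, Matrix.map_apply]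

lemma matA_zpow (m : ℕ) (n : ℤ) : (matA m) ^ n = E21 m (n : Zinv m) := by
  have : (matA m) ^ n = e21hom m ((Multiplicative.ofAdd (1 : Zinv m)) ^ n) := by
    rw [map_zpow]
    rfl
  rw [this]
  have h2 : (Multiplicative.ofAdd (1 : Zinv m)) ^ n = Multiplicative.ofAdd ((n : Zinv m)) := by
    rw [← ofAdd_zsmul]
    norm_num
  rw [h2]
  rfl

lemma q_U_pow (m : ℕ) (hm : 0 < m) (k : ℕ) :
    q ((matU m hm) ^ k) = !![(m:ℚ)^k, 0; 0, ((m:ℚ)⁻¹)^k] := by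
  induction k with
  | zero => simpa [Matrix.one_fin_two] using q_one m
  | succ k ih =>
    rw [pow_succ, q_mul, ih, q_U, Matrix.mul_fin_two]
    norm_num [pow_succ]

/-- every element of ℤ[1/m] has the form n / m^k -/
lemma rep' (m : ℕ) (x : ℚ) (hx : x ∈ Zinv m) :
    ∃ (n : ℤ) (k : ℕ), x * (m:ℚ)^k = (n : ℚ) := by
  have hx' : x ∈ Subring.closure {((m : ℚ))⁻¹} := hx
  clear hx
  induction hx' using Subring.closure_induction with
  | mem y hy =>
    rcases Set.mem_singleton_iff.1 hy with rfl
    by_cases hm : (m : ℚ) = 0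
    · exact ⟨0, 1, by simp [hm]⟩
    · exact ⟨1, 1, by simp [inv_mul_cancel₀ hm]⟩
  | zero => exact ⟨0, 0, by simp⟩
  | one => exact ⟨1, 0, by simp⟩
  | add y z hy hz ihy ihz =>
    obtain ⟨n1, k1, h1⟩ := ihy
    obtain ⟨n2, k2, h2⟩ := ihz
    refine ⟨n1 * m^k2 + n2 * m^k1, k1 + k2, ?_⟩
    push_cast
    linear_combination (m:ℚ)^k2 * h1 + (m:ℚ)^k1 * h2
  | neg y hy ihy =>
    obtain ⟨n1, k1, h1⟩ := ihy
    exact ⟨-n1, k1, by push_cast; linear_combination -h1⟩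
  | mul y z hy hz ihy ihz =>
    obtain ⟨n1, k1, h1⟩ := ihy
    obtain ⟨n2, k2, h2⟩ := ihz
    refine ⟨n1 * n2, k1 + k2, ?_⟩
    push_cast
    linear_combination (z * (m:ℚ)^k2) * h1 + (n1:ℚ) * h2

lemma rep (m : ℕ) (x : Zinv m) : ∃ (n : ℤ) (k : ℕ), (x : ℚ) * (m:ℚ)^k = (n : ℚ) :=
  rep' m x x.2

end SLaux
namespace SLaux

lemma E12_mul (m : ℕ) (x y : Zinv m) : E12 m x * E12 m y = E12 m (x + y) := by
  apply q_inj
  rw [q_mul, q_E12, q_E12, q_E12, Matrix.mul_fin_two]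
  norm_num [add_comm]

lemma E12_zero (m : ℕ) : E12 m 0 = 1 := by
  apply q_inj
  rw [q_E12, q_one, Matrix.one_fin_two]
  norm_num

section
variable (m : ℕ) (hm : 0 < m)

lemma hAmem : matA m ∈ Subgroup.closure {matA m, matB m, matU m hm} :=
  Subgroup.subset_closure (by simp)

lemma hBmem : matB m ∈ Subgroup.closure {matA m, matB m, matU m hm} :=
  Subgroup.subset_closure (by simp)

lemma hUmem : matU m hm ∈ Subgroup.closure {matA m, matB m, matU m hm} :=
  Subgroup.subset_closure (by simp)

lemma hE21mem (x : Zinv m) : E21 m x ∈ Subgroup.closure {matA m, matB m, matU m hm} := by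
  obtain ⟨n, k, hn⟩ := rep m x
  have hm0 : (m : ℚ) ≠ 0 := Nat.cast_ne_zero.2 hm.ne'
  set N : ℤ := n * (m : ℤ) ^ k with hN
  have key : E21 m x * (matU m hm) ^ k = (matU m hm) ^ k * (matA m) ^ N := by
    apply q_inj
    rw [q_mul, q_mul, q_E21, q_U_pow, matA_zpow, q_E21, Matrix.mul_fin_two,
      Matrix.mul_fin_two]
    have hcN : (((N : ℤ) : Zinv m) : ℚ) = (N : ℚ) := by push_cast; ring
    ext i j
    fin_cases i <;> fin_cases j <;> simp [hcN] <;> push_cast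
    · field_simp
      rw [hN]
      push_cast
      linear_combination ((m:ℚ)^k) * hn
  have : E21 m x = (matU m hm) ^ k * (matA m) ^ N * ((matU m hm) ^ k)⁻¹ := by
    rw [← key, mul_inv_cancel_right]
  rw [this]
  exact mul_mem (mul_mem (pow_mem (hUmem m hm) k) (zpow_mem (hAmem m hm) N))
    (inv_mem (pow_mem (hUmem m hm) k))

lemma hE12mem (x : Zinv m) : E12 m x ∈ Subgroup.closure {matA m, matB m, matU m hm} := by
  have key : E12 m x * matB m = matB m * E21 m (-x) := by
    apply q_inj
    rw [q_mul, q_mul, q_E12, q_B, q_E21, Matrix.mul_fin_two, Matrix.mul_fin_two]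
    norm_num
  have : E12 m x = matB m * E21 m (-x) * (matB m)⁻¹ := by
    rw [← key, mul_inv_cancel_right]
  rw [this]
  exact mul_mem (mul_mem (hBmem m hm) (hE21mem m hm (-x))) (inv_mem (hBmem m hm))

lemma main : ∀ Qn : ℕ, ∀ g : Matrix.SpecialLinearGroup (Fin 2) (Zinv m),
    ∀ (k : ℕ) (P Q : ℤ),
    (((g : Matrix (Fin 2) (Fin 2) (Zinv m)) 0 0 : Zinv m) : ℚ) * (m:ℚ)^k = (P : ℚ) →
    (((g : Matrix (Fin 2) (Fin 2) (Zinv m)) 1 0 : Zinv m) : ℚ) * (m:ℚ)^k = (Q : ℚ) →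
    Q.natAbs = Qn → g ∈ Subgroup.closure {matA m, matB m, matU m hm} := by
  intro Qn
  induction Qn using Nat.strong_induction_on with
  | _ Qn IH =>
    intro g k P Q hP hQ hQn
    have hm0 : (m : ℚ) ≠ 0 := Nat.cast_ne_zero.2 hm.ne'
    have hmk : (m : ℚ) ^ k ≠ 0 := pow_ne_zero _ hm0
    by_cases h0 : Q = 0
    · -- bottom-left entry is zero
      subst h0
      have hc : (g : Matrix (Fin 2) (Fin 2) (Zinv m)) 1 0 = 0 := by
        refine Subtype.ext ?_
        have : (((g : Matrix (Fin 2) (Fin 2) (Zinv m)) 1 0 : Zinv m) : ℚ) = 0 := by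
          have := hQ
          push_cast at this
          exact (mul_eq_zero.1 this).resolve_right hmk
        simpa using this
      set a := (g : Matrix (Fin 2) (Fin 2) (Zinv m)) 0 0 with ha
      set b := (g : Matrix (Fin 2) (Fin 2) (Zinv m)) 0 1 with hb
      set d := (g : Matrix (Fin 2) (Fin 2) (Zinv m)) 1 1 with hd
      have hdet : a * d = 1 := by
        have h2 := g.2
        rw [Matrix.det_fin_two] at h2
        rw [← ha, ← hb, ← hd, hc] at h2
        simpa using h2
      have hdetq : (a : ℚ) * (d : ℚ) = 1 := by exact_mod_cast congrArg (↑· : Zinv m → ℚ) hdet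
      have hqg : q g = !![(a:ℚ), (b:ℚ); 0, (d:ℚ)] := by
        ext i j
        fin_cases i <;> fin_cases j <;>
          simp [q, Matrix.map_apply, ← ha, ← hb, ← hd, hc]
      have key : g * E12 m (-(d * b)) * matB m = E12 m a * E21 m (-d) * E12 m a := by
        apply q_inj
        simp only [q_mul, hqg, q_E12, q_E21, q_B, Matrix.mul_fin_two]
        push_cast
        rw [← Matrix.ext_iff]
        simp only [Fin.forall_fin_two, Matrix.cons_val', Matrix.cons_val_zero,
          Matrix.cons_val_one, Matrix.head_cons, Matrix.head_fin_const, Matrix.of_apply,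
          Matrix.empty_val', Matrix.cons_val_fin_one]
        refine ⟨⟨?_, ?_⟩, ⟨?_, ?_⟩⟩
        · linear_combination ((b:ℚ) + 1) * hdetq
        · linear_combination (a:ℚ) * hdetq
        · ring
        · linear_combination hdetq
      have hg : g = (E12 m a * E21 m (-d) * E12 m a) * (matB m)⁻¹ * (E12 m (-(d * b)))⁻¹ := by
        rw [← key]
        group
      rw [hg]
      exact mul_mem (mul_mem (mul_mem (mul_mem (hE12mem m hm a) (hE21mem m hm (-d)))
        (hE12mem m hm a)) (inv_mem (hBmem m hm))) (inv_mem (hE12mem m hm (-(d*b))))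
    · -- Euclidean step
      set t : ℤ := P / Q with ht
      set r : ℤ := P % Q with hr
      have hmod : Q * t + r = P := Int.mul_ediv_add_emod P Q
      have hr0 : 0 ≤ r := Int.emod_nonneg P h0
      have hrlt : r < |Q| := by have := Int.emod_lt P h0; rw [Int.abs_eq_natAbs]; exact this
      set x : Zinv m := -((t : ℤ) : Zinv m) with hx
      set g' := (matB m * E12 m x) * g with hg'
      have e00 : (g' : Matrix (Fin 2) (Fin 2) (Zinv m)) 0 0
          = (g : Matrix (Fin 2) (Fin 2) (Zinv m)) 1 0 := by
        rw [hg', Matrix.SpecialLinearGroup.coe_mul, Matrix.SpecialLinearGroup.coe_mul]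
        simp [Matrix.SpecialLinearGroup.coe_mul, Matrix.mul_apply, Fin.sum_univ_two,
          matB, E12]
      have e10 : (g' : Matrix (Fin 2) (Fin 2) (Zinv m)) 1 0
          = -((g : Matrix (Fin 2) (Fin 2) (Zinv m)) 0 0)
            - x * (g : Matrix (Fin 2) (Fin 2) (Zinv m)) 1 0 := by
        rw [hg', Matrix.SpecialLinearGroup.coe_mul, Matrix.SpecialLinearGroup.coe_mul]
        simp [Matrix.SpecialLinearGroup.coe_mul, Matrix.mul_apply, Fin.sum_univ_two,
          matB, E12]
        ring
      have hP' : (((g' : Matrix (Fin 2) (Fin 2) (Zinv m)) 0 0 : Zinv m) : ℚ) * (m:ℚ)^k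
          = ((Q : ℤ) : ℚ) := by rw [e00]; exact hQ
      have hQ' : (((g' : Matrix (Fin 2) (Fin 2) (Zinv m)) 1 0 : Zinv m) : ℚ) * (m:ℚ)^k
          = ((-r : ℤ) : ℚ) := by
        rw [e10, hx]
        push_cast
        have hmodq : (Q : ℚ) * (t : ℚ) + (r : ℚ) = (P : ℚ) := by exact_mod_cast hmod
        linear_combination -hP + (t : ℚ) * hQ + hmodq
      have hlt : (-r).natAbs < Qn := by
        rw [← hQn]
        rw [Int.abs_eq_natAbs] at hrlt
        omega
      have hg'mem : g' ∈ Subgroup.closure {matA m, matB m, matU m hm} :=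
        IH (-r).natAbs hlt g' k Q (-r) hP' hQ' rfl
      have : g = (matB m * E12 m x)⁻¹ * g' := (inv_mul_cancel_left _ _).symm
      rw [this]
      exact mul_mem (inv_mem (mul_mem (hBmem m hm) (hE12mem m hm x))) hg'mem

end

end SLaux

theorem stmt_15 (m : ℕ) (hm : 0 < m) :
    Subgroup.closure {matA m, matB m, matU m hm} =
      (⊤ : Subgroup (Matrix.SpecialLinearGroup (Fin 2) (Zinv m))) := by
  rw [eq_top_iff]
  rintro g -
  obtain ⟨n1, k1, h1⟩ := SLaux.rep m ((g : Matrix (Fin 2) (Fin 2) (Zinv m)) 0 0)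
  obtain ⟨n2, k2, h2⟩ := SLaux.rep m ((g : Matrix (Fin 2) (Fin 2) (Zinv m)) 1 0)
  refine SLaux.main m hm ((n2 * (m:ℤ)^k1).natAbs) g (k1 + k2)
    (n1 * (m:ℤ)^k2) (n2 * (m:ℤ)^k1) ?_ ?_ rfl
  · push_cast
    linear_combination ((m:ℚ)^k2) * h1
  · push_cast
    linear_combination ((m:ℚ)^k1) * h2
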